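/- arXiv:1201.3377 — 3 statements merged into one kernel-verified Lean document; each statement's English description precedes it below -/
import Mathlib

section
/- Let (P,ρ,ζ̄) be an Eulerian quasi-graded poset with 0̂ and 1̂. Then its ab-index Ψ(P,ρ,ζ̄) can be written (uniquely) as a polynomial in the noncommutative variables c = a + b and d = ab + ba. -/
open scoped Classical
open Finset

noncomputable section

/-- The free noncommutative algebra `ℚ⟨a,b⟩`. -/
abbrev QA : Type := FreeAlgebra ℚ Bool

/-- The variable `a`. -/
def av : QA := FreeAlgebra.ι ℚ true

/-- The variable `b`. -/
def bv : QA := FreeAlgebra.ι ℚ false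

/-- `c = a + b`. -/
def cvar : QA := av + bv

/-- `d = ab + ba`. -/
def dvar : QA := av * bv + bv * av

variable {α : Type*}

/-- The `ζ̄`-weight of a chain encoded as `f : Fin (k+1) → α`:
the product of the values of `ζ̄` on consecutive elements. -/
def chainZeta (ζ : α → α → ℚ) {k : ℕ} (f : Fin (k + 1) → α) : ℚ :=
  (List.ofFn (fun i : Fin k => ζ (f i.castSucc) (f i.succ))).prod

/-- The `ab`-weight of a chain: `(a-b)^{g₁-1} · b · (a-b)^{g₂-1} · b ⋯ b · (a-b)^{g_k-1}`
where `gᵢ` are the successive rank gaps along the chain. -/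
def chainWt (ρ : α → ℕ) {k : ℕ} (f : Fin (k + 1) → α) : QA :=
  (List.ofFn (fun i : Fin k =>
    (if (i : ℕ) = 0 then 1 else bv) *
      (av - bv) ^ (ρ (f i.succ) - ρ (f i.castSucc) - 1))).prod

/-- `f` encodes a (strict) chain from `x` to `z`. -/
def IsChainFrom [PartialOrder α] {k : ℕ} (f : Fin (k + 1) → α) (x z : α) : Prop :=
  StrictMono f ∧ f 0 = x ∧ f (Fin.last k) = z

/-- The ab-index `Ψ` of the interval `[x,z]` of a quasi-graded poset:
the sum over all chains from `x` to `z` of `ζ̄(c) · wt(c)`. -/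
def abIndex [PartialOrder α] [Fintype α] (ρ : α → ℕ) (ζ : α → α → ℚ) (x z : α) : QA :=
  ∑ k ∈ Finset.range (Fintype.card α), ∑ f : Fin (k + 1) → α,
    if IsChainFrom f x z then chainZeta ζ f • chainWt ρ f else 0

/-- `(P,ρ,ζ̄)` is a quasi-graded poset: `ρ` is strictly order-preserving and `ζ̄`
is an element of the incidence algebra with `ζ̄(x,x) = 1`. -/
def IsQuasiGraded [PartialOrder α] (ρ : α → ℕ) (ζ : α → α → ℚ) : Prop :=
  StrictMono ρ ∧ (∀ x, ζ x x = 1) ∧ ∀ x y : α, ¬ x ≤ y → ζ x y = 0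

/-- Convolution in the incidence algebra. -/
def iaMul [PartialOrder α] [Fintype α] (f g : α → α → ℚ) : α → α → ℚ :=
  fun x z => ∑ y ∈ Finset.univ.filter (fun y => x ≤ y ∧ y ≤ z), f x y * g y z

/-- The identity `δ` of the incidence algebra. -/
def iaDelta : α → α → ℚ := fun x z => if x = z then 1 else 0

/-- The Eulerian condition on the interval `[x,z]`:
`∑_{x ≤ y ≤ z} (-1)^{ρ(y)-ρ(x)} ζ̄(x,y) ζ̄(y,z) = δ_{x,z}`. -/
def EulerianAt [PartialOrder α] [Fintype α] (ρ : α → ℕ) (ζ : α → α → ℚ) (x z : α) : Prop :=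
  (∑ y ∈ Finset.univ.filter (fun y => x ≤ y ∧ y ≤ z),
    (-1 : ℚ) ^ (ρ y - ρ x) * ζ x y * ζ y z) = iaDelta x z

/-- `(P,ρ,ζ̄)` is Eulerian. -/
def IsEulerian [PartialOrder α] [Fintype α] (ρ : α → ℕ) (ζ : α → α → ℚ) : Prop :=
  ∀ x z : α, x ≤ z → EulerianAt ρ ζ x z

/-- The flag `f̄`-vector: `f̄_S = ∑_c ζ̄(c)` over chains from `x` to `z`
whose interior elements have ranks exactly `S`. -/
def flagF [PartialOrder α] [Fintype α] (ρ : α → ℕ) (ζ : α → α → ℚ)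
    (x z : α) (S : Finset ℕ) : ℚ :=
  ∑ k ∈ Finset.range (Fintype.card α), ∑ f : Fin (k + 1) → α,
    if IsChainFrom f x z ∧
        (Finset.univ.filter (fun i : Fin (k + 1) => i ≠ 0 ∧ i ≠ Fin.last k)).image
          (fun i => ρ (f i)) = S
      then chainZeta ζ f else 0

/-- The flag `h̄`-vector: `h̄_S = ∑_{T ⊆ S} (-1)^{|S-T|} f̄_T`. -/
def flagH [PartialOrder α] [Fintype α] (ρ : α → ℕ) (ζ : α → α → ℚ)
    (x z : α) (S : Finset ℕ) : ℚ :=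
  ∑ T ∈ S.powerset, (-1 : ℚ) ^ (S.card - T.card) * flagF ρ ζ x z T

/-- Chains with respect to an explicit strict relation `lt`. -/
def IsChainFromRel (lt : α → α → Prop) {k : ℕ} (f : Fin (k + 1) → α) (x z : α) : Prop :=
  (∀ i j : Fin (k + 1), i < j → lt (f i) (f j)) ∧ f 0 = x ∧ f (Fin.last k) = z

/-- The ab-index with respect to an explicit strict order relation `lt`. -/
def abIndexRel [Fintype α] (lt : α → α → Prop) (ρ : α → ℕ) (ζ : α → α → ℚ)
    (x z : α) : QA :=
  ∑ k ∈ Finset.range (Fintype.card α), ∑ f : Fin (k + 1) → α,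
    if IsChainFromRel lt f x z then chainZeta ζ f • chainWt ρ f else 0

/-- The Eulerian condition with respect to an explicit order relation `le`. -/
def IsEulerianRel [Fintype α] (le : α → α → Prop) (ρ : α → ℕ) (ζ : α → α → ℚ) : Prop :=
  ∀ x z : α, le x z →
    (∑ y ∈ Finset.univ.filter (fun y => le x y ∧ le y z),
      (-1 : ℚ) ^ (ρ y - ρ x) * ζ x y * ζ y z) = (if x = z then (1 : ℚ) else 0)

/-- Carrier of the zipped poset: remove `x` and `y`; the element `z` plays
the role of the new element `w`. -/
abbrev ZipCarrier (α : Type*) (x y : α) : Type _ := {u : α // u ≠ x ∧ u ≠ y}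

/-- The strict order of the zipped poset: `u <_Q w` iff `u < x` or `u < y`,
`w <_Q v` iff `x < v`, and otherwise the order is inherited from `P`. -/
def zipLt [PartialOrder α] (x y z : α) : ZipCarrier α x y → ZipCarrier α x y → Prop :=
  fun u v =>
    if u.1 = z then v.1 ≠ z ∧ x < v.1
    else if v.1 = z then u.1 < x ∨ u.1 < y
    else u.1 < v.1

/-- The (non-strict) order of the zipped poset. -/
def zipLe [PartialOrder α] (x y z : α) : ZipCarrier α x y → ZipCarrier α x y → Prop :=
  fun u v => zipLt x y z u v ∨ u = v

/-- The rank function of the zipped poset: `ρ_Q(w) = ρ(x)`, otherwise inherited. -/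
def zipRank [PartialOrder α] (ρ : α → ℕ) (x y z : α) : ZipCarrier α x y → ℕ :=
  fun u => if u.1 = z then ρ x else ρ u.1

/-- The weighted zeta function of the zipped poset:
`ζ̄_Q(w,v) = ζ̄(x,v)`, `ζ̄_Q(u,w) = ζ̄(u,x) + ζ̄(u,y) - ζ̄(u,z)`, otherwise inherited. -/
def zipZeta [PartialOrder α] (ζ : α → α → ℚ) (x y z : α) :
    ZipCarrier α x y → ZipCarrier α x y → ℚ :=
  fun u v =>
    if v.1 = z then (if u.1 = z then 1 else ζ u.1 x + ζ u.1 y - ζ u.1 z)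
    else if u.1 = z then ζ x v.1
    else ζ u.1 v.1

/-! ### Auxiliary development for the cd-index existence theorem -/

section CDExistence

/-- `e = a - b`. -/
def evar : QA := av - bv

/-- The cd-subalgebra. -/
def CDalg : Subalgebra ℚ QA := Algebra.adjoin ℚ ({cvar, dvar} : Set QA)

lemma cvar_mem_CDalg : cvar ∈ CDalg :=
  Algebra.subset_adjoin (by simp)

lemma dvar_mem_CDalg : dvar ∈ CDalg :=
  Algebra.subset_adjoin (by simp)

lemma evar_sq_mem_CDalg : evar ^ 2 ∈ CDalg := by
  have h : evar ^ 2 = cvar * cvar - (dvar + dvar) := by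
    simp only [evar, cvar, dvar]; noncomm_ring
  rw [h]
  exact sub_mem (mul_mem cvar_mem_CDalg cvar_mem_CDalg)
    (add_mem dvar_mem_CDalg dvar_mem_CDalg)

lemma evar_pow_even_mem (k : ℕ) : evar ^ (2 * k) ∈ CDalg := by
  rw [pow_mul]; exact pow_mem evar_sq_mem_CDalg k

variable {α : Type*} [Fintype α] [PartialOrder α]

/-- The open interval `(x,z)` as a finset. -/
def intr (x z : α) : Finset α := Finset.univ.filter fun y => x < y ∧ y < z

lemma mem_intr {x z y : α} : y ∈ intr x z ↔ x < y ∧ y < z := by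
  simp [intr]

/-- The recursively defined ab-index. -/
def Psi (ρ : α → ℕ) (ζ : α → α → ℚ) (x z : α) : QA :=
  if h : x < z then
    ζ x z • evar ^ (ρ z - ρ x - 1) +
      ∑ y ∈ (intr x z).attach,
        Psi ρ ζ x y.1 * (ζ y.1 z • (bv * evar ^ (ρ z - ρ y.1 - 1)))
  else if x = z then 1 else 0
termination_by (Finset.univ.filter fun u => x ≤ u ∧ u ≤ z).card
decreasing_by
  · have hy := mem_intr.mp y.2
    apply Finset.card_lt_card
    constructor
    · intro u hu
      simp only [Finset.mem_filter, Finset.mem_univ, true_and] at hu ⊢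
      exact ⟨hu.1, le_trans hu.2 hy.2.le⟩
    · intro hsub
      have hz : z ∈ Finset.univ.filter fun u => x ≤ u ∧ u ≤ z := by
        simp [le_of_lt h]
      have := hsub hz
      simp only [Finset.mem_filter, Finset.mem_univ, true_and] at this
      exact absurd (lt_of_le_of_lt this.2 hy.2) (lt_irrefl _)

lemma Psi_self (ρ : α → ℕ) (ζ : α → α → ℚ) (x : α) : Psi ρ ζ x x = 1 := by
  rw [Psi]; simp

lemma Psi_not_le (ρ : α → ℕ) (ζ : α → α → ℚ) {x z : α} (h : ¬ x ≤ z) :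
    Psi ρ ζ x z = 0 := by
  rw [Psi]
  rw [dif_neg (fun hlt => h hlt.le), if_neg (fun he => h (le_of_eq he))]

/-- Last-element recursion for `Psi`. -/
lemma Psi_lt (ρ : α → ℕ) (ζ : α → α → ℚ) {x z : α} (h : x < z) :
    Psi ρ ζ x z = ζ x z • evar ^ (ρ z - ρ x - 1) +
      ∑ y ∈ intr x z, Psi ρ ζ x y * (ζ y z • (bv * evar ^ (ρ z - ρ y - 1))) := by
  rw [Psi, dif_pos h]
  congr 1
  exact Finset.sum_attach (intr x z) (fun t => Psi ρ ζ x t * (ζ t z • (bv * evar ^ (ρ z - ρ t - 1))))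

end CDExistence
section CDExistence2

variable {α : Type*} [Fintype α] [PartialOrder α]

/-- The closed interval `[x,z]` as a finset. -/
def iccF (x z : α) : Finset α := Finset.univ.filter fun u => x ≤ u ∧ u ≤ z

lemma iccF_card_lt_left {x u z : α} (hxu : x < u) (huz : u ≤ z) :
    (iccF u z).card < (iccF x z).card := by
  apply Finset.card_lt_card
  constructor
  · intro w hw
    simp only [iccF, Finset.mem_filter, Finset.mem_univ, true_and] at hw ⊢
    exact ⟨le_trans hxu.le hw.1, hw.2⟩
  · intro hsub
    have hx : x ∈ iccF x z := by
      simp only [iccF, Finset.mem_filter, Finset.mem_univ, true_and]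
      exact ⟨le_refl x, le_trans hxu.le huz⟩
    have := hsub hx
    simp only [iccF, Finset.mem_filter, Finset.mem_univ, true_and] at this
    exact absurd (lt_of_lt_of_le hxu this.1) (lt_irrefl x)

lemma iccF_card_lt_right {x y z : α} (hxy : x ≤ y) (hyz : y < z) :
    (iccF x y).card < (iccF x z).card := by
  apply Finset.card_lt_card
  constructor
  · intro w hw
    simp only [iccF, Finset.mem_filter, Finset.mem_univ, true_and] at hw ⊢
    exact ⟨hw.1, le_trans hw.2 hyz.le⟩
  · intro hsub
    have hz : z ∈ iccF x z := by
      simp only [iccF, Finset.mem_filter, Finset.mem_univ, true_and]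
      exact ⟨le_trans hxy hyz.le, le_refl z⟩
    have := hsub hz
    simp only [iccF, Finset.mem_filter, Finset.mem_univ, true_and] at this
    exact absurd (lt_of_le_of_lt this.2 hyz) (lt_irrefl z)

lemma sum_intr_swap {M : Type*} [AddCommMonoid M] (x z : α) (F : α → α → M) :
    ∑ y ∈ intr x z, ∑ u ∈ intr x y, F u y = ∑ u ∈ intr x z, ∑ y ∈ intr u z, F u y := by
  refine Finset.sum_comm' ?_
  intro y u
  simp only [mem_intr]
  constructor
  · rintro ⟨⟨h1, h2⟩, h3, h4⟩
    exact ⟨⟨h4, h2⟩, h3, lt_trans h4 h2⟩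
  · rintro ⟨⟨h1, h2⟩, h3, h4⟩
    exact ⟨⟨lt_trans h3 h1, h2⟩, h3, h1⟩

/-- The core sum identity behind the first-element recursion. -/
lemma Psi_sum_eq (ρ : α → ℕ) (ζ : α → α → ℚ) :
    ∀ N : ℕ, ∀ x z : α, (iccF x z).card ≤ N → x < z →
      ∑ y ∈ intr x z, Psi ρ ζ x y * (ζ y z • (bv * evar ^ (ρ z - ρ y - 1))) =
      ∑ y ∈ intr x z, ζ x y • (evar ^ (ρ y - ρ x - 1) * (bv * Psi ρ ζ y z)) := by
  intro N
  induction N with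
  | zero =>
    intro x z hc hxz
    exfalso
    have hx : x ∈ iccF x z := by
      simp only [iccF, Finset.mem_filter, Finset.mem_univ, true_and]
      exact ⟨le_refl x, hxz.le⟩
    have := Finset.card_pos.mpr ⟨x, hx⟩
    omega
  | succ N IH =>
    intro x z hc hxz
    -- first-element recursion on subintervals [x,y], from IH
    have hfirst : ∀ y ∈ intr x z, Psi ρ ζ x y =
        ζ x y • evar ^ (ρ y - ρ x - 1) +
          ∑ u ∈ intr x y, ζ x u • (evar ^ (ρ u - ρ x - 1) * (bv * Psi ρ ζ u y)) := by
      intro y hy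
      obtain ⟨hxy, hyz⟩ := mem_intr.mp hy
      rw [Psi_lt ρ ζ hxy]
      congr 1
      exact IH x y (by have := iccF_card_lt_right hxy.le hyz; omega) hxy
    calc
      ∑ y ∈ intr x z, Psi ρ ζ x y * (ζ y z • (bv * evar ^ (ρ z - ρ y - 1)))
          = ∑ y ∈ intr x z,
              ((ζ y z * ζ x y) • (evar ^ (ρ y - ρ x - 1) * (bv * evar ^ (ρ z - ρ y - 1))) +
               ∑ u ∈ intr x y, (ζ y z * ζ x u) •
                 (evar ^ (ρ u - ρ x - 1) *
                   (bv * (Psi ρ ζ u y * (bv * evar ^ (ρ z - ρ y - 1)))))) := by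
            refine Finset.sum_congr rfl fun y hy => ?_
            rw [hfirst y hy]
            simp only [add_mul, Finset.sum_mul, Finset.mul_sum, Finset.smul_sum,
              smul_mul_assoc, mul_smul_comm, smul_smul, smul_add, mul_assoc,
              mul_comm, mul_left_comm]
      _ = (∑ y ∈ intr x z,
              (ζ y z * ζ x y) • (evar ^ (ρ y - ρ x - 1) * (bv * evar ^ (ρ z - ρ y - 1)))) +
          ∑ u ∈ intr x z, ∑ y ∈ intr u z, (ζ y z * ζ x u) •
            (evar ^ (ρ u - ρ x - 1) *
              (bv * (Psi ρ ζ u y * (bv * evar ^ (ρ z - ρ y - 1))))) := by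
            rw [Finset.sum_add_distrib]
            congr 1
            exact sum_intr_swap x z _
      _ = (∑ y ∈ intr x z,
              (ζ y z * ζ x y) • (evar ^ (ρ y - ρ x - 1) * (bv * evar ^ (ρ z - ρ y - 1)))) +
          ∑ u ∈ intr x z,
            (ζ x u • (evar ^ (ρ u - ρ x - 1) * (bv * Psi ρ ζ u z)) -
             (ζ u z * ζ x u) • (evar ^ (ρ u - ρ x - 1) * (bv * evar ^ (ρ z - ρ u - 1)))) := by
            congr 1
            refine Finset.sum_congr rfl fun u hu => ?_
            obtain ⟨hxu, huz⟩ := mem_intr.mp hu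
            have hsum : ∑ y ∈ intr u z, Psi ρ ζ u y * (ζ y z • (bv * evar ^ (ρ z - ρ y - 1)))
                = Psi ρ ζ u z - ζ u z • evar ^ (ρ z - ρ u - 1) := by
              rw [eq_sub_iff_add_eq, add_comm]
              exact (Psi_lt ρ ζ huz).symm
            calc
              ∑ y ∈ intr u z, (ζ y z * ζ x u) •
                  (evar ^ (ρ u - ρ x - 1) *
                    (bv * (Psi ρ ζ u y * (bv * evar ^ (ρ z - ρ y - 1)))))
                  = ζ x u • (evar ^ (ρ u - ρ x - 1) *
                      (bv * (∑ y ∈ intr u z,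
                        Psi ρ ζ u y * (ζ y z • (bv * evar ^ (ρ z - ρ y - 1)))))) := by
                    simp only [Finset.mul_sum, Finset.smul_sum, mul_smul_comm, smul_smul,
                      mul_comm, mul_left_comm]
              _ = ζ x u • (evar ^ (ρ u - ρ x - 1) *
                      (bv * (Psi ρ ζ u z - ζ u z • evar ^ (ρ z - ρ u - 1)))) := by rw [hsum]
              _ = ζ x u • (evar ^ (ρ u - ρ x - 1) * (bv * Psi ρ ζ u z)) -
                  (ζ u z * ζ x u) • (evar ^ (ρ u - ρ x - 1) * (bv * evar ^ (ρ z - ρ u - 1))) := by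
                    simp only [mul_sub, smul_sub, mul_smul_comm, smul_smul,
                      mul_comm, mul_left_comm]
      _ = ∑ y ∈ intr x z, ζ x y • (evar ^ (ρ y - ρ x - 1) * (bv * Psi ρ ζ y z)) := by
            rw [Finset.sum_sub_distrib]
            abel

/-- First-element recursion for `Psi`. -/
lemma Psi_first (ρ : α → ℕ) (ζ : α → α → ℚ) {x z : α} (h : x < z) :
    Psi ρ ζ x z = ζ x z • evar ^ (ρ z - ρ x - 1) +
      ∑ y ∈ intr x z, ζ x y • (evar ^ (ρ y - ρ x - 1) * (bv * Psi ρ ζ y z)) := by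
  rw [Psi_lt ρ ζ h]
  congr 1
  exact Psi_sum_eq ρ ζ _ x z le_rfl h

end CDExistence2
section CDExistence3

variable {α : Type*} [Fintype α] [PartialOrder α]

lemma euler_intr {ρ : α → ℕ} {ζ : α → α → ℚ} (hρ : StrictMono ρ) (hζd : ∀ x, ζ x x = 1)
    (hE : IsEulerian ρ ζ) {x z : α} (h : x < z) :
    ∑ y ∈ intr x z, (-1 : ℚ) ^ (ρ z - ρ y) * (ζ y z * ζ x y)
      = -((-1 : ℚ) ^ (ρ z - ρ x) * ζ x z) - ζ x z := by
  have hEa := hE x z h.le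
  unfold EulerianAt iaDelta at hEa
  rw [if_neg h.ne] at hEa
  have hset : Finset.univ.filter (fun y => x ≤ y ∧ y ≤ z) = insert x (insert z (intr x z)) := by
    ext u
    simp only [Finset.mem_filter, Finset.mem_univ, true_and, Finset.mem_insert, mem_intr]
    constructor
    · rintro ⟨h1, h2⟩
      rcases eq_or_lt_of_le h1 with h1' | h1'
      · exact Or.inl h1'.symm
      rcases eq_or_lt_of_le h2 with h2' | h2'
      · exact Or.inr (Or.inl h2')
      · exact Or.inr (Or.inr ⟨h1', h2'⟩)
    · rintro (rfl | rfl | ⟨h1, h2⟩)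
      · exact ⟨le_refl u, h.le⟩
      · exact ⟨h.le, le_refl u⟩
      · exact ⟨h1.le, h2.le⟩
  have hxni : x ∉ insert z (intr x z) := by
    simp only [Finset.mem_insert, mem_intr]
    push_neg
    exact ⟨h.ne, fun hc => absurd hc (lt_irrefl x)⟩
  have hzni : z ∉ intr x z := by
    simp only [mem_intr]
    push_neg
    intro _
    exact lt_irrefl z
  rw [hset, Finset.sum_insert hxni, Finset.sum_insert hzni] at hEa
  simp only [Nat.sub_self, pow_zero, one_mul, hζd] at hEa
  -- hEa : ζ x z + ((-1)^(ρ z - ρ x) * ζ x z * 1 + ∑ ...) = 0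
  have hS : ∑ y ∈ intr x z, (-1 : ℚ) ^ (ρ y - ρ x) * ζ x y * ζ y z
      = -ζ x z - (-1 : ℚ) ^ (ρ z - ρ x) * ζ x z := by
    rw [mul_one] at hEa
    linarith [hEa]
  have hnn : ((-1 : ℚ)) ^ (ρ z - ρ x) * (-1 : ℚ) ^ (ρ z - ρ x) = 1 := by
    rw [← pow_add]
    exact Even.neg_one_pow ⟨ρ z - ρ x, rfl⟩
  have hcongr : ∑ y ∈ intr x z, (-1 : ℚ) ^ (ρ z - ρ y) * (ζ y z * ζ x y)
      = (-1 : ℚ) ^ (ρ z - ρ x) * ∑ y ∈ intr x z, (-1 : ℚ) ^ (ρ y - ρ x) * ζ x y * ζ y z := by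
    rw [Finset.mul_sum]
    refine Finset.sum_congr rfl fun y hy => ?_
    obtain ⟨hxy, hyz⟩ := mem_intr.mp hy
    have h1 : ρ x < ρ y := hρ hxy
    have h2 : ρ y < ρ z := hρ hyz
    have hbb : ((-1 : ℚ)) ^ (ρ y - ρ x) * (-1 : ℚ) ^ (ρ y - ρ x) = 1 := by
      rw [← pow_add]
      exact Even.neg_one_pow ⟨ρ y - ρ x, rfl⟩
    have hadd : (-1 : ℚ) ^ (ρ z - ρ y) * (-1 : ℚ) ^ (ρ y - ρ x) = (-1 : ℚ) ^ (ρ z - ρ x) := by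
      rw [← pow_add]
      congr 1
      omega
    calc (-1 : ℚ) ^ (ρ z - ρ y) * (ζ y z * ζ x y)
        = ((-1 : ℚ) ^ (ρ z - ρ y) * ((-1 : ℚ) ^ (ρ y - ρ x) * (-1 : ℚ) ^ (ρ y - ρ x)))
            * (ζ y z * ζ x y) := by rw [hbb, mul_one]
      _ = ((-1 : ℚ) ^ (ρ z - ρ y) * (-1 : ℚ) ^ (ρ y - ρ x)) *
            ((-1 : ℚ) ^ (ρ y - ρ x) * ζ x y * ζ y z) := by ring
      _ = (-1 : ℚ) ^ (ρ z - ρ x) * ((-1 : ℚ) ^ (ρ y - ρ x) * ζ x y * ζ y z) := by rw [hadd]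
  rw [hcongr, hS]
  linear_combination (-(ζ x z)) * hnn

lemma Psi_key_aux (ρ : α → ℕ) (ζ : α → α → ℚ) (hρ : StrictMono ρ) (hζd : ∀ x, ζ x x = 1)
    (hE : IsEulerian ρ ζ) :
    ∀ N : ℕ, ∀ x z : α, (iccF x z).card ≤ N → x < z →
      Psi ρ ζ x z + ∑ y ∈ intr x z, ((-1 : ℚ) ^ (ρ z - ρ y) * ζ y z) •
          (Psi ρ ζ x y * (av * evar ^ (ρ z - ρ y - 1)))
        = (-((-1 : ℚ) ^ (ρ z - ρ x) * ζ x z)) • evar ^ (ρ z - ρ x - 1) := by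
  intro N
  induction N with
  | zero =>
    intro x z hc hxz
    exfalso
    have hx : x ∈ iccF x z := by
      simp only [iccF, Finset.mem_filter, Finset.mem_univ, true_and]
      exact ⟨le_refl x, hxz.le⟩
    have := Finset.card_pos.mpr ⟨x, hx⟩
    omega
  | succ N IH =>
    intro x z hc hxz
    have hIH : ∀ u ∈ intr x z,
        ∑ y ∈ intr u z, ((-1 : ℚ) ^ (ρ z - ρ y) * ζ y z) •
            (Psi ρ ζ u y * (av * evar ^ (ρ z - ρ y - 1)))
          = (-((-1 : ℚ) ^ (ρ z - ρ u) * ζ u z)) • evar ^ (ρ z - ρ u - 1) - Psi ρ ζ u z := by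
      intro u hu
      obtain ⟨hxu, huz⟩ := mem_intr.mp hu
      rw [eq_sub_iff_add_eq, add_comm]
      exact IH u z (by have := iccF_card_lt_left hxu huz.le; omega) huz
    have hbig : ∑ y ∈ intr x z, ((-1 : ℚ) ^ (ρ z - ρ y) * ζ y z) •
          (Psi ρ ζ x y * (av * evar ^ (ρ z - ρ y - 1)))
        = (∑ y ∈ intr x z, ((-1 : ℚ) ^ (ρ z - ρ y) * (ζ y z * ζ x y)) •
            (evar ^ (ρ y - ρ x - 1) * (av * evar ^ (ρ z - ρ y - 1)))) +
          ∑ u ∈ intr x z, ∑ y ∈ intr u z, ((-1 : ℚ) ^ (ρ z - ρ y) * (ζ y z * ζ x u)) •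
            (evar ^ (ρ u - ρ x - 1) *
              (bv * (Psi ρ ζ u y * (av * evar ^ (ρ z - ρ y - 1))))) := by
      calc
        ∑ y ∈ intr x z, ((-1 : ℚ) ^ (ρ z - ρ y) * ζ y z) •
            (Psi ρ ζ x y * (av * evar ^ (ρ z - ρ y - 1)))
            = ∑ y ∈ intr x z,
                (((-1 : ℚ) ^ (ρ z - ρ y) * (ζ y z * ζ x y)) •
                  (evar ^ (ρ y - ρ x - 1) * (av * evar ^ (ρ z - ρ y - 1))) +
                 ∑ u ∈ intr x y, ((-1 : ℚ) ^ (ρ z - ρ y) * (ζ y z * ζ x u)) •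
                  (evar ^ (ρ u - ρ x - 1) *
                    (bv * (Psi ρ ζ u y * (av * evar ^ (ρ z - ρ y - 1)))))) := by
              refine Finset.sum_congr rfl fun y hy => ?_
              obtain ⟨hxy, hyz⟩ := mem_intr.mp hy
              rw [Psi_first ρ ζ hxy]
              simp only [add_mul, Finset.sum_mul, Finset.mul_sum, Finset.smul_sum,
                smul_mul_assoc, mul_smul_comm, smul_smul, smul_add, mul_assoc,
                mul_comm, mul_left_comm]
        _ = _ := by
              rw [Finset.sum_add_distrib]
              congr 1
              exact sum_intr_swap x z _
    have hinner : ∀ u ∈ intr x z,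
        ∑ y ∈ intr u z, ((-1 : ℚ) ^ (ρ z - ρ y) * (ζ y z * ζ x u)) •
            (evar ^ (ρ u - ρ x - 1) *
              (bv * (Psi ρ ζ u y * (av * evar ^ (ρ z - ρ y - 1)))))
          = -(((-1 : ℚ) ^ (ρ z - ρ u) * (ζ u z * ζ x u)) •
              (evar ^ (ρ u - ρ x - 1) * (bv * evar ^ (ρ z - ρ u - 1)))) -
            ζ x u • (evar ^ (ρ u - ρ x - 1) * (bv * Psi ρ ζ u z)) := by
      intro u hu
      calc
        ∑ y ∈ intr u z, ((-1 : ℚ) ^ (ρ z - ρ y) * (ζ y z * ζ x u)) •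
            (evar ^ (ρ u - ρ x - 1) *
              (bv * (Psi ρ ζ u y * (av * evar ^ (ρ z - ρ y - 1)))))
            = ζ x u • (evar ^ (ρ u - ρ x - 1) *
                (bv * (∑ y ∈ intr u z, ((-1 : ℚ) ^ (ρ z - ρ y) * ζ y z) •
                  (Psi ρ ζ u y * (av * evar ^ (ρ z - ρ y - 1)))))) := by
              simp only [Finset.mul_sum, Finset.smul_sum, mul_smul_comm, smul_smul,
                mul_assoc, mul_comm, mul_left_comm]
        _ = ζ x u • (evar ^ (ρ u - ρ x - 1) *
                (bv * ((-((-1 : ℚ) ^ (ρ z - ρ u) * ζ u z)) • evar ^ (ρ z - ρ u - 1) -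
                  Psi ρ ζ u z))) := by rw [hIH u hu]
        _ = -(((-1 : ℚ) ^ (ρ z - ρ u) * (ζ u z * ζ x u)) •
              (evar ^ (ρ u - ρ x - 1) * (bv * evar ^ (ρ z - ρ u - 1)))) -
            ζ x u • (evar ^ (ρ u - ρ x - 1) * (bv * Psi ρ ζ u z)) := by
              simp only [mul_sub, smul_sub, mul_smul_comm, smul_smul, neg_smul, smul_neg,
                mul_neg, neg_mul, mul_assoc, mul_comm, mul_left_comm]
    have hPf : ∑ u ∈ intr x z, ζ x u • (evar ^ (ρ u - ρ x - 1) * (bv * Psi ρ ζ u z))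
        = Psi ρ ζ x z - ζ x z • evar ^ (ρ z - ρ x - 1) := by
      rw [eq_sub_iff_add_eq, add_comm]
      exact (Psi_first ρ ζ hxz).symm
    rw [hbig, Finset.sum_congr rfl hinner]
    rw [Finset.sum_sub_distrib, Finset.sum_neg_distrib, hPf]
    have hdiff : (∑ y ∈ intr x z, ((-1 : ℚ) ^ (ρ z - ρ y) * (ζ y z * ζ x y)) •
            (evar ^ (ρ y - ρ x - 1) * (av * evar ^ (ρ z - ρ y - 1)))) -
          ∑ y ∈ intr x z, ((-1 : ℚ) ^ (ρ z - ρ y) * (ζ y z * ζ x y)) •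
            (evar ^ (ρ y - ρ x - 1) * (bv * evar ^ (ρ z - ρ y - 1)))
        = (∑ y ∈ intr x z, (-1 : ℚ) ^ (ρ z - ρ y) * (ζ y z * ζ x y)) •
            evar ^ (ρ z - ρ x - 1) := by
      rw [Finset.sum_smul, ← Finset.sum_sub_distrib]
      refine Finset.sum_congr rfl fun y hy => ?_
      obtain ⟨hxy, hyz⟩ := mem_intr.mp hy
      have h1 : ρ x < ρ y := hρ hxy
      have h2 : ρ y < ρ z := hρ hyz
      rw [← smul_sub]
      congr 1
      rw [← mul_sub, ← sub_mul]
      show evar ^ (ρ y - ρ x - 1) * (evar * evar ^ (ρ z - ρ y - 1)) = _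
      rw [← pow_succ', ← pow_add]
      congr 1
      omega
    -- assemble
    have : Psi ρ ζ x z +
        ((∑ y ∈ intr x z, ((-1 : ℚ) ^ (ρ z - ρ y) * (ζ y z * ζ x y)) •
            (evar ^ (ρ y - ρ x - 1) * (av * evar ^ (ρ z - ρ y - 1)))) +
         (-(∑ y ∈ intr x z, ((-1 : ℚ) ^ (ρ z - ρ y) * (ζ y z * ζ x y)) •
            (evar ^ (ρ y - ρ x - 1) * (bv * evar ^ (ρ z - ρ y - 1)))) -
          (Psi ρ ζ x z - ζ x z • evar ^ (ρ z - ρ x - 1))))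
      = ((∑ y ∈ intr x z, (-1 : ℚ) ^ (ρ z - ρ y) * (ζ y z * ζ x y)) •
            evar ^ (ρ z - ρ x - 1)) + ζ x z • evar ^ (ρ z - ρ x - 1) := by
      rw [← hdiff]
      abel
    rw [this, euler_intr hρ hζd hE hxz]
    rw [← add_smul]
    congr 1
    ring
  
end CDExistence3
section CDExistence4

variable {α : Type*} [Fintype α] [PartialOrder α]

lemma Psi_key (ρ : α → ℕ) (ζ : α → α → ℚ) (hρ : StrictMono ρ) (hζd : ∀ x, ζ x x = 1)
    (hE : IsEulerian ρ ζ) {x z : α} (h : x < z) :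
    Psi ρ ζ x z = (-((-1 : ℚ) ^ (ρ z - ρ x) * ζ x z)) • evar ^ (ρ z - ρ x - 1) -
      ∑ y ∈ intr x z, ((-1 : ℚ) ^ (ρ z - ρ y) * ζ y z) •
        (Psi ρ ζ x y * (av * evar ^ (ρ z - ρ y - 1))) := by
  rw [eq_sub_iff_add_eq]
  exact Psi_key_aux ρ ζ hρ hζd hE _ x z le_rfl h

/-- The crucial membership fact for each step weight. -/
lemma weight_mem {m : ℕ} (hm : 1 ≤ m) :
    bv * evar ^ (m - 1) - ((-1 : ℚ) ^ m) • (av * evar ^ (m - 1)) ∈ CDalg := by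
  rcases Nat.even_or_odd m with he | ho
  · -- even: bv*E - av*E = -(evar^m)
    have h1 : ((-1 : ℚ) ^ m) = 1 := Even.neg_one_pow he
    rw [h1, one_smul]
    have h2 : bv * evar ^ (m - 1) - av * evar ^ (m - 1) = -(evar ^ m) := by
      rw [← sub_mul]
      have : bv - av = -evar := by rw [evar, neg_sub]
      rw [this, neg_mul, ← pow_succ']
      congr 2
      omega
    rw [h2]
    obtain ⟨k, hk⟩ := he
    exact neg_mem (by rw [show m = 2 * k by omega]; exact evar_pow_even_mem k)
  · -- odd: bv*E + av*E = cvar * E, with m-1 even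
    have h1 : ((-1 : ℚ) ^ m) = -1 := Odd.neg_one_pow ho
    rw [h1, neg_smul, one_smul, sub_neg_eq_add]
    have h2 : bv * evar ^ (m - 1) + av * evar ^ (m - 1) = cvar * evar ^ (m - 1) := by
      rw [← add_mul]
      congr 1
      rw [cvar, add_comm]
    rw [h2]
    obtain ⟨k, hk⟩ := ho
    exact mul_mem cvar_mem_CDalg (by rw [show m - 1 = 2 * k by omega]; exact evar_pow_even_mem k)

lemma Psi_mem (ρ : α → ℕ) (ζ : α → α → ℚ) (hρ : StrictMono ρ) (hζd : ∀ x, ζ x x = 1)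
    (hE : IsEulerian ρ ζ) :
    ∀ N : ℕ, ∀ x z : α, (iccF x z).card ≤ N → x ≤ z → Psi ρ ζ x z ∈ CDalg := by
  intro N
  induction N with
  | zero =>
    intro x z hc hxz
    exfalso
    have hx : x ∈ iccF x z := by
      simp only [iccF, Finset.mem_filter, Finset.mem_univ, true_and]
      exact ⟨le_refl x, hxz⟩
    have := Finset.card_pos.mpr ⟨x, hx⟩
    omega
  | succ N IH =>
    intro x z hc hxz
    rcases eq_or_lt_of_le hxz with rfl | hlt
    · rw [Psi_self]
      exact one_mem _
    have h2 : (2 : ℚ) • Psi ρ ζ x z =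
        ((1 - (-1 : ℚ) ^ (ρ z - ρ x)) * ζ x z) • evar ^ (ρ z - ρ x - 1) +
        ∑ y ∈ intr x z, Psi ρ ζ x y *
          (ζ y z • (bv * evar ^ (ρ z - ρ y - 1) -
            ((-1 : ℚ) ^ (ρ z - ρ y)) • (av * evar ^ (ρ z - ρ y - 1)))) := by
      have e1 := Psi_lt ρ ζ hlt
      have e2 := Psi_key ρ ζ hρ hζd hE hlt
      calc (2 : ℚ) • Psi ρ ζ x z = Psi ρ ζ x z + Psi ρ ζ x z := two_smul ℚ _
        _ = (ζ x z • evar ^ (ρ z - ρ x - 1) +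
              ∑ y ∈ intr x z, Psi ρ ζ x y * (ζ y z • (bv * evar ^ (ρ z - ρ y - 1)))) +
            ((-((-1 : ℚ) ^ (ρ z - ρ x) * ζ x z)) • evar ^ (ρ z - ρ x - 1) -
              ∑ y ∈ intr x z, ((-1 : ℚ) ^ (ρ z - ρ y) * ζ y z) •
                (Psi ρ ζ x y * (av * evar ^ (ρ z - ρ y - 1)))) := by rw [← e1, ← e2]
        _ = (ζ x z • evar ^ (ρ z - ρ x - 1) +
              (-((-1 : ℚ) ^ (ρ z - ρ x) * ζ x z)) • evar ^ (ρ z - ρ x - 1)) +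
            (∑ y ∈ intr x z, Psi ρ ζ x y * (ζ y z • (bv * evar ^ (ρ z - ρ y - 1))) -
             ∑ y ∈ intr x z, ((-1 : ℚ) ^ (ρ z - ρ y) * ζ y z) •
                (Psi ρ ζ x y * (av * evar ^ (ρ z - ρ y - 1)))) := by abel
        _ = ((1 - (-1 : ℚ) ^ (ρ z - ρ x)) * ζ x z) • evar ^ (ρ z - ρ x - 1) +
            ∑ y ∈ intr x z, Psi ρ ζ x y *
              (ζ y z • (bv * evar ^ (ρ z - ρ y - 1) -
                ((-1 : ℚ) ^ (ρ z - ρ y)) • (av * evar ^ (ρ z - ρ y - 1)))) := by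
            congr 1
            · rw [← add_smul]
              congr 1
              ring
            · rw [← Finset.sum_sub_distrib]
              refine Finset.sum_congr rfl fun y hy => ?_
              simp only [mul_sub, smul_sub, mul_smul_comm, smul_smul, mul_assoc,
                mul_comm, mul_left_comm]
    have hmem2 : (2 : ℚ) • Psi ρ ζ x z ∈ CDalg := by
      rw [h2]
      apply add_mem
      · rcases Nat.even_or_odd (ρ z - ρ x) with he | ho
        · rw [Even.neg_one_pow he]
          simp only [sub_self, zero_mul, zero_smul]
          exact zero_mem _
        · apply Subalgebra.smul_mem
          obtain ⟨k, hk⟩ := ho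
          have hn : 1 ≤ ρ z - ρ x := by
            have := hρ hlt
            omega
          rw [show ρ z - ρ x - 1 = 2 * k by omega]
          exact evar_pow_even_mem k
      · apply sum_mem
        intro y hy
        obtain ⟨hxy, hyz⟩ := mem_intr.mp hy
        apply mul_mem
        · exact IH x y (by have := iccF_card_lt_right hxy.le hyz; omega) hxy.le
        · apply Subalgebra.smul_mem
          exact weight_mem (by have := hρ hyz; omega)
    have : Psi ρ ζ x z = (2⁻¹ : ℚ) • ((2 : ℚ) • Psi ρ ζ x z) := by
      rw [smul_smul]
      norm_num
    rw [this]
    exact Subalgebra.smul_mem _ hmem2 _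

end CDExistence4
section CDExistence5

variable {α : Type*} [Fintype α] [PartialOrder α]

lemma snoc_apply_zero {j : ℕ} (g : Fin (j + 1) → α) (v : α) :
    (Fin.snoc g v : Fin (j + 1 + 1) → α) 0 = g 0 := by
  rw [show (0 : Fin (j + 1 + 1)) = Fin.castSucc 0 by simp, Fin.snoc_castSucc]

lemma strictMono_snoc_iff {j : ℕ} (g : Fin (j + 1) → α) (v : α) :
    StrictMono (Fin.snoc g v : Fin (j + 1 + 1) → α) ↔
      StrictMono g ∧ g (Fin.last j) < v := by
  rw [Fin.strictMono_iff_lt_succ, Fin.strictMono_iff_lt_succ]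
  constructor
  · intro H
    refine ⟨fun i => ?_, ?_⟩
    · have := H i.castSucc
      rwa [Fin.succ_castSucc, Fin.snoc_castSucc, Fin.snoc_castSucc] at this
    · have := H (Fin.last j)
      rwa [Fin.succ_last, Fin.snoc_castSucc, Fin.snoc_last] at this
  · rintro ⟨H1, H2⟩ i
    refine Fin.lastCases ?_ ?_ i
    · rw [Fin.succ_last, Fin.snoc_castSucc, Fin.snoc_last]
      exact H2
    · intro i'
      rw [Fin.succ_castSucc, Fin.snoc_castSucc, Fin.snoc_castSucc]
      exact H1 i'

lemma isChainFrom_snoc_iff {j : ℕ} (g : Fin (j + 1) → α) (v x z : α) :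
    IsChainFrom (Fin.snoc g v : Fin (j + 1 + 1) → α) x z ↔
      (StrictMono g ∧ g 0 = x ∧ g (Fin.last j) < v) ∧ v = z := by
  unfold IsChainFrom
  rw [strictMono_snoc_iff, snoc_apply_zero, Fin.snoc_last]
  tauto

lemma chainZeta_snoc {j : ℕ} (ζ : α → α → ℚ) (g : Fin (j + 1) → α) (v : α) :
    chainZeta ζ (Fin.snoc g v : Fin (j + 1 + 1) → α) =
      chainZeta ζ g * ζ (g (Fin.last j)) v := by
  unfold chainZeta
  rw [List.ofFn_succ', List.prod_concat]
  simp only [Fin.succ_castSucc, Fin.snoc_castSucc, Fin.succ_last, Fin.snoc_last]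

lemma chainWt_snoc {j : ℕ} (ρ : α → ℕ) (g : Fin (j + 1) → α) (v : α) :
    chainWt ρ (Fin.snoc g v : Fin (j + 1 + 1) → α) =
      chainWt ρ g *
        ((if j = 0 then 1 else bv) * (av - bv) ^ (ρ v - ρ (g (Fin.last j)) - 1)) := by
  unfold chainWt
  rw [List.ofFn_succ', List.prod_concat]
  simp only [Fin.succ_castSucc, Fin.snoc_castSucc, Fin.succ_last, Fin.snoc_last,
    Fin.val_last, Fin.coe_castSucc]

variable (ρ : α → ℕ) (ζ : α → α → ℚ)

/-- The `k`-th summand of `abIndex`. -/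
def chainSum (x z : α) (k : ℕ) : QA :=
  ∑ f : Fin (k + 1) → α, if IsChainFrom f x z then chainZeta ζ f • chainWt ρ f else 0

lemma abIndex_eq_sum_chainSum (x z : α) :
    abIndex ρ ζ x z = ∑ k ∈ Finset.range (Fintype.card α), chainSum ρ ζ x z k := rfl

lemma chainSum_zero_self (x : α) : chainSum ρ ζ x x 0 = 1 := by
  unfold chainSum
  have h : ∀ f : Fin 1 → α, (if IsChainFrom f x x then chainZeta ζ f • chainWt ρ f else 0)
      = if f = (fun _ => x) then 1 else 0 := by
    intro f
    have hz : chainZeta ζ f = 1 := by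
      unfold chainZeta
      simp
    have hw : chainWt ρ f = 1 := by
      unfold chainWt
      simp
    rw [hz, hw, one_smul]
    congr 1
    simp only [eq_iff_iff]
    constructor
    · rintro ⟨hm, h0, hl⟩
      funext i
      rw [Fin.fin_one_eq_zero i, h0]
    · rintro rfl
      refine ⟨fun a b hab => ?_, rfl, rfl⟩
      rw [Fin.fin_one_eq_zero a, Fin.fin_one_eq_zero b] at hab
      exact absurd hab (lt_irrefl _)
  rw [Finset.sum_congr rfl fun f _ => h f]
  rw [Finset.sum_ite_eq' Finset.univ (fun _ => x) (fun _ => (1 : QA))]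
  simp

lemma chainSum_self_pos (x : α) {k : ℕ} (hk : k ≠ 0) : chainSum ρ ζ x x k = 0 := by
  unfold chainSum
  apply Finset.sum_eq_zero
  intro f _
  rw [if_neg]
  rintro ⟨hm, h0, hl⟩
  have hlt : (0 : Fin (k + 1)) < Fin.last k := by
    rw [Fin.lt_def]
    simpa using Nat.pos_of_ne_zero hk
  have := hm hlt
  rw [h0, hl] at this
  exact lt_irrefl x this

lemma chainSum_zero_ne {x z : α} (h : x ≠ z) : chainSum ρ ζ x z 0 = 0 := by
  unfold chainSum
  apply Finset.sum_eq_zero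
  intro f _
  rw [if_neg]
  rintro ⟨hm, h0, hl⟩
  exact h (h0 ▸ hl ▸ rfl)

lemma abIndex_self (x : α) : abIndex ρ ζ x x = 1 := by
  rw [abIndex_eq_sum_chainSum]
  have hcard : 0 < Fintype.card α := Fintype.card_pos_iff.mpr ⟨x⟩
  rw [Finset.sum_eq_single_of_mem 0 (Finset.mem_range.mpr hcard)
    (fun k _ hk => chainSum_self_pos ρ ζ x hk)]
  exact chainSum_zero_self ρ ζ x

lemma abIndex_not_le {x z : α} (h : ¬ x ≤ z) : abIndex ρ ζ x z = 0 := by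
  rw [abIndex_eq_sum_chainSum]
  apply Finset.sum_eq_zero
  intro k _
  apply Finset.sum_eq_zero
  intro f _
  rw [if_neg]
  rintro ⟨hm, h0, hl⟩
  exact h (h0 ▸ hl ▸ hm.monotone (Fin.zero_le _))

lemma chainSum_long {x y : α} {k : ℕ} (hk : Fintype.card α ≤ k + 1) (z : α) (hyz : y < z) :
    chainSum ρ ζ x y k = 0 := by
  unfold chainSum
  apply Finset.sum_eq_zero
  intro f _
  rw [if_neg]
  rintro ⟨hm, h0, hl⟩
  have hmono : StrictMono (Fin.snoc f z : Fin (k + 1 + 1) → α) :=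
    (strictMono_snoc_iff f z).mpr ⟨hm, by rw [hl]; exact hyz⟩
  have hle := Fintype.card_le_of_injective _ hmono.injective
  rw [Fintype.card_fin] at hle
  omega

lemma chainSum_succ (x z : α) (j : ℕ) :
    chainSum ρ ζ x z (j + 1) =
      ∑ y ∈ Finset.univ.filter (fun y => y < z),
        chainSum ρ ζ x y j *
          (ζ y z • ((if y = x then 1 else bv) * (av - bv) ^ (ρ z - ρ y - 1))) := by
  calc
    chainSum ρ ζ x z (j + 1)
        = ∑ p : α × (Fin (j + 1) → α),
            (if IsChainFrom (Fin.snoc p.2 p.1 : Fin (j + 1 + 1) → α) x z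
             then chainZeta ζ (Fin.snoc p.2 p.1 : Fin (j + 1 + 1) → α) •
                  chainWt ρ (Fin.snoc p.2 p.1 : Fin (j + 1 + 1) → α) else 0) := by
          exact (Equiv.sum_comp (Fin.snocEquiv (fun _ => α))
            (fun f => if IsChainFrom f x z then chainZeta ζ f • chainWt ρ f else 0)).symm
    _ = ∑ v : α, ∑ g : Fin (j + 1) → α,
          (if IsChainFrom (Fin.snoc g v : Fin (j + 1 + 1) → α) x z
           then chainZeta ζ (Fin.snoc g v : Fin (j + 1 + 1) → α) •
                chainWt ρ (Fin.snoc g v : Fin (j + 1 + 1) → α) else 0) := by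
          exact Fintype.sum_prod_type
            (f := fun p : α × (Fin (j + 1) → α) =>
              if IsChainFrom (Fin.snoc p.2 p.1 : Fin (j + 1 + 1) → α) x z
              then chainZeta ζ (Fin.snoc p.2 p.1 : Fin (j + 1 + 1) → α) •
                   chainWt ρ (Fin.snoc p.2 p.1 : Fin (j + 1 + 1) → α) else 0)
    _ = ∑ v : α, ∑ g : Fin (j + 1) → α,
          (if v = z then
            (if StrictMono g ∧ g 0 = x ∧ g (Fin.last j) < z then
              (chainZeta ζ g * ζ (g (Fin.last j)) z) •
                (chainWt ρ g *
                  ((if j = 0 then 1 else bv) *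
                    (av - bv) ^ (ρ z - ρ (g (Fin.last j)) - 1)))
             else 0)
           else 0) := by
          refine Finset.sum_congr rfl fun v _ => Finset.sum_congr rfl fun g _ => ?_
          by_cases hv : v = z
          · subst hv
            rw [if_pos rfl, chainZeta_snoc, chainWt_snoc]
            congr 1
            rw [isChainFrom_snoc_iff]
            simp only [eq_iff_iff, and_true]
          · rw [if_neg hv, if_neg]
            rw [isChainFrom_snoc_iff]
            rintro ⟨-, hvz⟩
            exact hv hvz
    _ = ∑ g : Fin (j + 1) → α,
          (if StrictMono g ∧ g 0 = x ∧ g (Fin.last j) < z then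
            (chainZeta ζ g * ζ (g (Fin.last j)) z) •
              (chainWt ρ g *
                ((if j = 0 then 1 else bv) *
                  (av - bv) ^ (ρ z - ρ (g (Fin.last j)) - 1)))
           else 0) := by
          rw [Finset.sum_comm]
          refine Finset.sum_congr rfl fun g _ => ?_
          simp only [Finset.sum_ite_eq', Finset.mem_univ, if_true]
    _ = ∑ g : Fin (j + 1) → α, ∑ y : α,
          (if y = g (Fin.last j) then
            (if IsChainFrom g x y ∧ y < z then
              (chainZeta ζ g * ζ y z) •
                (chainWt ρ g *
                  ((if y = x then 1 else bv) * (av - bv) ^ (ρ z - ρ y - 1)))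
             else 0)
           else 0) := by
          refine Finset.sum_congr rfl fun g _ => ?_
          simp only [Finset.sum_ite_eq', Finset.mem_univ, if_true]
          by_cases H : StrictMono g ∧ g 0 = x ∧ g (Fin.last j) < z
          · rw [if_pos H, if_pos (show IsChainFrom g x (g (Fin.last j)) ∧ g (Fin.last j) < z
              from ⟨⟨H.1, H.2.1, rfl⟩, H.2.2⟩)]
            have hiff : (j = 0) ↔ (g (Fin.last j) = x) := by
              constructor
              · intro hj
                subst hj
                exact H.2.1
              · intro hgx
                by_contra hj
                have hlt : (0 : Fin (j + 1)) < Fin.last j := by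
                  rw [Fin.lt_def]
                  simpa using Nat.pos_of_ne_zero hj
                have := H.1 hlt
                rw [H.2.1, hgx] at this
                exact lt_irrefl x this
            by_cases hj : j = 0
            · rw [if_pos hj, if_pos (hiff.mp hj)]
            · rw [if_neg hj, if_neg (fun hc => hj (hiff.mpr hc))]
          · rw [if_neg H, if_neg]
            rintro ⟨⟨hm, h0, -⟩, hyz⟩
            exact H ⟨hm, h0, hyz⟩
    _ = ∑ y : α, ∑ g : Fin (j + 1) → α,
          (if IsChainFrom g x y ∧ y < z then
            (chainZeta ζ g * ζ y z) •
              (chainWt ρ g *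
                ((if y = x then 1 else bv) * (av - bv) ^ (ρ z - ρ y - 1)))
           else 0) := by
          rw [Finset.sum_comm]
          refine Finset.sum_congr rfl fun y _ => Finset.sum_congr rfl fun g _ => ?_
          by_cases hy : y = g (Fin.last j)
          · rw [if_pos hy]
          · rw [if_neg hy, if_neg]
            rintro ⟨⟨-, -, hl⟩, -⟩
            exact hy hl.symm
    _ = ∑ y ∈ Finset.univ.filter (fun y => y < z), ∑ g : Fin (j + 1) → α,
          (if IsChainFrom g x y then
            (chainZeta ζ g * ζ y z) •
              (chainWt ρ g *
                ((if y = x then 1 else bv) * (av - bv) ^ (ρ z - ρ y - 1)))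
           else 0) := by
          rw [Finset.sum_filter]
          refine Finset.sum_congr rfl fun y _ => ?_
          by_cases hy : y < z
          · rw [if_pos hy]
            refine Finset.sum_congr rfl fun g _ => ?_
            by_cases hC : IsChainFrom g x y
            · rw [if_pos ⟨hC, hy⟩, if_pos hC]
            · rw [if_neg (fun hc => hC hc.1), if_neg hC]
          · rw [if_neg hy]
            apply Finset.sum_eq_zero
            intro g _
            rw [if_neg (fun hc => hy hc.2)]
    _ = ∑ y ∈ Finset.univ.filter (fun y => y < z),
          chainSum ρ ζ x y j *
            (ζ y z • ((if y = x then 1 else bv) * (av - bv) ^ (ρ z - ρ y - 1))) := by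
          refine Finset.sum_congr rfl fun y _ => ?_
          unfold chainSum
          rw [Finset.sum_mul]
          refine Finset.sum_congr rfl fun g _ => ?_
          by_cases hC : IsChainFrom g x y
          · rw [if_pos hC, if_pos hC]
            simp only [smul_mul_assoc, mul_smul_comm, smul_smul, mul_comm, mul_left_comm]
          · rw [if_neg hC, if_neg hC, zero_mul]

end CDExistence5
section CDExistence6

variable {α : Type*} [Fintype α] [PartialOrder α]

lemma abIndex_eq_Psi (ρ : α → ℕ) (ζ : α → α → ℚ) :
    ∀ N : ℕ, ∀ x z : α, (iccF x z).card ≤ N → x ≤ z →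
      abIndex ρ ζ x z = Psi ρ ζ x z := by
  intro N
  induction N with
  | zero =>
    intro x z hc hxz
    exfalso
    have hx : x ∈ iccF x z := by
      simp only [iccF, Finset.mem_filter, Finset.mem_univ, true_and]
      exact ⟨le_refl x, hxz⟩
    have := Finset.card_pos.mpr ⟨x, hx⟩
    omega
  | succ N IH =>
    intro x z hc hxz
    rcases eq_or_lt_of_le hxz with rfl | hlt
    · rw [abIndex_self, Psi_self]
    obtain ⟨M, hM⟩ : ∃ M, Fintype.card α = M + 1 := by
      have : 0 < Fintype.card α := Fintype.card_pos_iff.mpr ⟨x⟩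
      exact ⟨Fintype.card α - 1, by omega⟩
    have hfins : Finset.univ.filter (fun y => x ≤ y ∧ y < z) = insert x (intr x z) := by
      ext u
      simp only [Finset.mem_filter, Finset.mem_univ, true_and, Finset.mem_insert, mem_intr]
      constructor
      · rintro ⟨h1, h2⟩
        rcases eq_or_lt_of_le h1 with h1' | h1'
        · exact Or.inl h1'.symm
        · exact Or.inr ⟨h1', h2⟩
      · rintro (rfl | ⟨h1, h2⟩)
        · exact ⟨le_refl u, hlt⟩
        · exact ⟨h1.le, h2⟩
    have hxnot : x ∉ intr x z := by
      simp only [mem_intr]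
      push_neg
      intro hcon
      exact absurd hcon (lt_irrefl x)
    rw [abIndex_eq_sum_chainSum, hM, Finset.sum_range_succ',
      chainSum_zero_ne ρ ζ hlt.ne, add_zero]
    calc
      ∑ j ∈ Finset.range M, chainSum ρ ζ x z (j + 1)
          = ∑ j ∈ Finset.range M, ∑ y ∈ Finset.univ.filter (fun y => y < z),
              chainSum ρ ζ x y j *
                (ζ y z • ((if y = x then 1 else bv) * (av - bv) ^ (ρ z - ρ y - 1))) :=
            Finset.sum_congr rfl fun j _ => chainSum_succ ρ ζ x z j
      _ = ∑ y ∈ Finset.univ.filter (fun y => y < z),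
            (∑ j ∈ Finset.range M, chainSum ρ ζ x y j) *
              (ζ y z • ((if y = x then 1 else bv) * (av - bv) ^ (ρ z - ρ y - 1))) := by
            rw [Finset.sum_comm]
            exact Finset.sum_congr rfl fun y _ => (Finset.sum_mul _ _ _).symm
      _ = ∑ y ∈ Finset.univ.filter (fun y => y < z),
            abIndex ρ ζ x y *
              (ζ y z • ((if y = x then 1 else bv) * (av - bv) ^ (ρ z - ρ y - 1))) := by
            refine Finset.sum_congr rfl fun y hy => ?_
            have hyz : y < z := by
              simpa only [Finset.mem_filter, Finset.mem_univ, true_and] using hy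
            congr 1
            rw [abIndex_eq_sum_chainSum, hM, Finset.sum_range_succ,
              chainSum_long ρ ζ (le_of_eq hM) z hyz, add_zero]
      _ = ∑ y ∈ Finset.univ.filter (fun y => x ≤ y ∧ y < z),
            abIndex ρ ζ x y *
              (ζ y z • ((if y = x then 1 else bv) * (av - bv) ^ (ρ z - ρ y - 1))) := by
            symm
            apply Finset.sum_subset
            · intro u hu
              simp only [Finset.mem_filter, Finset.mem_univ, true_and] at hu ⊢
              exact hu.2
            · intro u hu hnu
              simp only [Finset.mem_filter, Finset.mem_univ, true_and] at hu hnu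
              push_neg at hnu
              rw [abIndex_not_le ρ ζ (fun hle => hnu hle hu)]
              exact zero_mul _
      _ = abIndex ρ ζ x x *
            (ζ x z • ((if x = x then 1 else bv) * (av - bv) ^ (ρ z - ρ x - 1))) +
          ∑ y ∈ intr x z,
            abIndex ρ ζ x y *
              (ζ y z • ((if y = x then 1 else bv) * (av - bv) ^ (ρ z - ρ y - 1))) := by
            rw [hfins, Finset.sum_insert hxnot]
      _ = Psi ρ ζ x z := by
            rw [Psi_lt ρ ζ hlt, abIndex_self, one_mul, if_pos rfl, one_mul]
            simp only [evar]
            congr 1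
            refine Finset.sum_congr rfl fun y hy => ?_
            obtain ⟨hxy, hyz⟩ := mem_intr.mp hy
            rw [IH x y (by have := iccF_card_lt_right hxy.le hyz; omega) hxy.le,
              if_neg hxy.ne']

end CDExistence6
/-- the ab-index of an Eulerian quasi-graded poset lies in the
subalgebra of `ℚ⟨a,b⟩` generated by `c = a+b` and `d = ab+ba` (the cd-index exists). -/
theorem cd_index_exists {α : Type*} [Fintype α] [PartialOrder α] [BoundedOrder α]
    (ρ : α → ℕ) (ζ : α → α → ℚ) (hq : IsQuasiGraded ρ ζ) (hE : IsEulerian ρ ζ) :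
    abIndex ρ ζ (⊥ : α) ⊤ ∈ Algebra.adjoin ℚ ({cvar, dvar} : Set QA) := by
  obtain ⟨hρ, hζd, hζ0⟩ := hq
  rw [abIndex_eq_Psi ρ ζ ((iccF (⊥ : α) (⊤ : α)).card) ⊥ ⊤ le_rfl bot_le]
  exact Psi_mem ρ ζ hρ hζd hE ((iccF (⊥ : α) (⊤ : α)).card) ⊥ ⊤ le_rfl bot_le
end
end

section
/- If (P,ρ_P,ζ̄_P) and (Q,ρ_Q,ζ̄_Q) are Eulerian quasi-graded posets, then their Cartesian product (P × Q, ρ, ζ̄), where ρ((x,y)) = ρ_P(x) + ρ_Q(y) and ζ̄((x,y),(z,w)) = ζ̄_P(x,z)·ζ̄_Q(y,w), is an Eulerian quasi-graded poset. -/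
open scoped Classical
open Finset

noncomputable section

variable {α : Type*}

/-- the Cartesian product of two Eulerian quasi-graded posets is an
Eulerian quasi-graded poset. -/
theorem cartesian_product_eulerian {α β : Type*} [Fintype α] [Fintype β]
    [PartialOrder α] [PartialOrder β]
    (ρP : α → ℕ) (ζP : α → α → ℚ) (ρQ : β → ℕ) (ζQ : β → β → ℚ)
    (hqP : IsQuasiGraded ρP ζP) (hqQ : IsQuasiGraded ρQ ζQ)
    (hEP : IsEulerian ρP ζP) (hEQ : IsEulerian ρQ ζQ) :
    IsQuasiGraded (fun p : α × β => ρP p.1 + ρQ p.2)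
        (fun p q : α × β => ζP p.1 q.1 * ζQ p.2 q.2) ∧
      IsEulerian (fun p : α × β => ρP p.1 + ρQ p.2)
        (fun p q : α × β => ζP p.1 q.1 * ζQ p.2 q.2) := by
  obtain ⟨hρP, hζP1, hζP0⟩ := hqP
  obtain ⟨hρQ, hζQ1, hζQ0⟩ := hqQ
  have hmonoP : Monotone ρP := fun a b h => by
    rcases eq_or_lt_of_le h with rfl | h
    · exact le_rfl
    · exact (hρP h).le
  have hmonoQ : Monotone ρQ := fun a b h => by
    rcases eq_or_lt_of_le h with rfl | h
    · exact le_rfl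
    · exact (hρQ h).le
  constructor
  · refine ⟨?_, ?_, ?_⟩
    · intro p q h
      rw [Prod.lt_iff] at h
      rcases h with ⟨h1, h2⟩ | ⟨h1, h2⟩
      · have := hρP h1; have := hmonoQ h2; simp only []; omega
      · have := hmonoP h1; have := hρQ h2; simp only []; omega
    · intro p; simp [hζP1, hζQ1]
    · intro p q h
      rw [Prod.le_def, not_and_or] at h
      rcases h with h | h
      · show ζP p.1 q.1 * ζQ p.2 q.2 = 0
        rw [hζP0 _ _ h, zero_mul]
      · show ζP p.1 q.1 * ζQ p.2 q.2 = 0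
        rw [hζQ0 _ _ h, mul_zero]
  · intro p q hpq
    unfold EulerianAt
    beta_reduce
    have key : ∀ (d : DecidablePred fun y : α × β => p ≤ y ∧ y ≤ q),
        @Finset.filter (α × β) (fun y => p ≤ y ∧ y ≤ q) d Finset.univ =
          (Finset.univ.filter (fun y => p.1 ≤ y ∧ y ≤ q.1)) ×ˢ
          (Finset.univ.filter (fun y => p.2 ≤ y ∧ y ≤ q.2)) := by
      intro d
      ext y
      simp only [Finset.mem_filter, Finset.mem_univ, true_and, Finset.mem_product,
        Prod.le_def]
      tauto
    rw [key _, Finset.sum_product]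
    have hP := hEP p.1 q.1 hpq.1
    have hQ := hEQ p.2 q.2 hpq.2
    unfold EulerianAt at hP hQ
    have hdelta : iaDelta p q = iaDelta p.1 q.1 * iaDelta p.2 q.2 := by
      unfold iaDelta
      by_cases h1 : p.1 = q.1 <;> by_cases h2 : p.2 = q.2 <;>
        simp [h1, h2, Prod.ext_iff]
    rw [hdelta, ← hP, ← hQ, Finset.sum_mul_sum]
    refine Finset.sum_congr rfl fun y1 h1 => Finset.sum_congr rfl fun y2 h2 => ?_
    simp only [Finset.mem_filter, Finset.mem_univ, true_and] at h1 h2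
    have e1 : ρP p.1 ≤ ρP y1 := hmonoP h1.1
    have e2 : ρQ p.2 ≤ ρQ y2 := hmonoQ h2.1
    have e3 : (ρP y1 + ρQ y2) - (ρP p.1 + ρQ p.2) =
        (ρP y1 - ρP p.1) + (ρQ y2 - ρQ p.2) := by omega
    rw [e3, pow_add]; ring
end
end

section
/- Zipping preserves the Eulerian property: if (P,ρ,ζ̄) is an Eulerian quasi-graded poset with 0̂ and 1̂ containing a zipper x, y, z, then the zipped quasi-graded poset (Q,ρ_Q,ζ̄_Q) is also Eulerian. -/
open scoped Classical
open Finset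

noncomputable section

variable {α : Type*}

/-- Auxiliary: the Eulerian sum extended over the whole universe. -/
private lemma fullSum_eulerian {α : Type*} [Fintype α] [PartialOrder α]
    (ρ : α → ℕ) (ζ : α → α → ℚ) (hq : IsQuasiGraded ρ ζ) (hE : IsEulerian ρ ζ)
    (u t : α) :
    ∑ a : α, (-1 : ℚ) ^ (ρ a - ρ u) * ζ u a * ζ a t = if u = t then 1 else 0 := by
  obtain ⟨hmono, hrefl, hzero⟩ := hq
  by_cases h : u ≤ t
  · have h2 := hE u t h
    unfold EulerianAt iaDelta at h2
    have h3 := Finset.sum_filter_of_ne (s := (Finset.univ : Finset α))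
      (f := fun a => (-1 : ℚ) ^ (ρ a - ρ u) * ζ u a * ζ a t)
      (p := fun a => u ≤ a ∧ a ≤ t) (fun a _ hne => by
        constructor
        · by_contra hh
          exact hne (by
            show (-1 : ℚ) ^ (ρ a - ρ u) * ζ u a * ζ a t = 0
            rw [hzero u a hh]; ring)
        · by_contra hh
          exact hne (by
            show (-1 : ℚ) ^ (ρ a - ρ u) * ζ u a * ζ a t = 0
            rw [hzero a t hh]; ring))
    rw [← h3]
    exact h2
  · rw [if_neg (by rintro rfl; exact h le_rfl)]
    refine Finset.sum_eq_zero fun a _ => ?_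
    by_cases h1 : u ≤ a
    · by_cases h2 : a ≤ t
      · exact absurd (h1.trans h2) h
      · rw [hzero a t h2, mul_zero]
    · rw [hzero u a h1, mul_zero, zero_mul]

/-- α-level version of the zipped rank. -/
private def zrA {α : Type*} (ρ : α → ℕ) (x z : α) : α → ℕ :=
  fun a => if a = z then ρ x else ρ a

/-- α-level version of the zipped zeta. -/
private def zzA {α : Type*} (ζ : α → α → ℚ) (x y z : α) : α → α → ℚ :=
  fun a b =>
    if b = z then (if a = z then 1 else ζ a x + ζ a y - ζ a z)
    else if a = z then ζ x b
    else ζ a b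

private lemma zip_key {α : Type*} [Fintype α] [PartialOrder α]
    (ρ : α → ℕ) (ζ : α → α → ℚ)
    (hq : IsQuasiGraded ρ ζ) (hE : IsEulerian ρ ζ)
    (x y z : α) (hxy : x ≠ y)
    (hrxy : ρ x = ρ y) (hrz : ρ x = ρ z + 1)
    (hzx : z ⋖ x) (hzy : z ⋖ y) (hcov : ∀ v : α, z ⋖ v → v = x ∨ v = y)
    (hzeta : ∀ v : α, z < v → ρ x < ρ v → ζ x v = ζ z v ∧ ζ y v = ζ z v)
    (h1x : ζ z x = 1) (h1y : ζ z y = 1)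
    (u₀ v₀ : α) (hux : u₀ ≠ x) (huy : u₀ ≠ y) (hvx : v₀ ≠ x) (hvy : v₀ ≠ y) :
    ∑ a ∈ Finset.univ.filter (fun a => a ≠ x ∧ a ≠ y),
      ((-1 : ℚ) ^ (zrA ρ x z a - zrA ρ x z u₀) * zzA ζ x y z u₀ a * zzA ζ x y z a v₀)
      = if u₀ = v₀ then 1 else 0 := by
  obtain ⟨hmono, hrefl, hzero⟩ := hq
  have hble : ∀ a b : α, ζ a b ≠ 0 → a ≤ b := fun a b h => by
    by_contra hh; exact h (hzero a b hh)
  have hzltx : z < x := hzx.lt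
  have hzlty : z < y := hzy.lt
  have hzx' : z ≠ x := hzltx.ne
  have hzy' : z ≠ y := hzlty.ne
  have hnyx : ¬ y ≤ x := fun h => by
    have := hmono (lt_of_le_of_ne h (Ne.symm hxy)); omega
  have hnxy : ¬ x ≤ y := fun h => by
    have := hmono (lt_of_le_of_ne h hxy); omega
  have hnxz : ¬ x ≤ z := fun h => (lt_of_lt_of_le hzltx h).false
  have hnyz : ¬ y ≤ z := fun h => (lt_of_lt_of_le hzlty h).false
  have hζyx : ζ y x = 0 := hzero _ _ hnyx
  have hζxy : ζ x y = 0 := hzero _ _ hnxy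
  have hζxz : ζ x z = 0 := hzero _ _ hnxz
  have hζyz : ζ y z = 0 := hzero _ _ hnyz
  set T : Finset α := ((Finset.univ.erase x).erase y).erase z with hT
  have hfs : (Finset.univ.filter (fun a => a ≠ x ∧ a ≠ y) : Finset α)
      = (Finset.univ.erase x).erase y := by
    ext a; simp [Finset.mem_erase, and_comm]
  have hzmem : z ∈ (Finset.univ.erase x).erase y := by simp [hzx', hzy']
  have hTmem : ∀ a ∈ T, a ≠ x ∧ a ≠ y ∧ a ≠ z := by
    intro a ha
    rw [hT] at ha
    simp only [Finset.mem_erase, Finset.mem_univ, and_true] at ha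
    tauto
  have hsplit : ∀ g : α → ℚ, ∑ a : α, g a = g x + g y + g z + ∑ a ∈ T, g a := by
    intro g
    rw [← Finset.add_sum_erase _ g (Finset.mem_univ x),
        ← Finset.add_sum_erase _ g
          (by simp [Ne.symm hxy] : y ∈ Finset.univ.erase x),
        ← Finset.add_sum_erase _ g hzmem, ← hT]
    ring
  have hfull : ∀ w t : α, ∑ a ∈ T, (-1 : ℚ) ^ (ρ a - ρ w) * ζ w a * ζ a t
      = (if w = t then 1 else 0)
        - (-1 : ℚ) ^ (ρ x - ρ w) * ζ w x * ζ x t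
        - (-1 : ℚ) ^ (ρ y - ρ w) * ζ w y * ζ y t
        - (-1 : ℚ) ^ (ρ z - ρ w) * ζ w z * ζ z t := by
    intro w t
    have h := fullSum_eulerian ρ ζ ⟨hmono, hrefl, hzero⟩ hE w t
    rw [hsplit (fun a => (-1 : ℚ) ^ (ρ a - ρ w) * ζ w a * ζ a t)] at h
    linear_combination h
  by_cases hvz : v₀ = z
  · rw [hvz]
    by_cases huz : u₀ = z
    · rw [huz, if_pos rfl, hfs, ← Finset.add_sum_erase _ _ hzmem, ← hT]
      have h1 : ∀ a ∈ T,
          (-1 : ℚ) ^ (zrA ρ x z a - zrA ρ x z z) * zzA ζ x y z z a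
            * zzA ζ x y z a z = 0 := by
        intro a ha
        obtain ⟨hax, hay, haz⟩ := hTmem a ha
        by_cases h0 : ζ x a = 0
        · simp [zzA, haz, h0]
        · have hxa : x < a := lt_of_le_of_ne (hble _ _ h0) (Ne.symm hax)
          have hρxa : ρ x < ρ a := hmono hxa
          have e1 : ζ a x = 0 := hzero _ _ (fun h => (hxa.trans_le h).false)
          have e2 : ζ a y = 0 := hzero _ _ (fun h => by
            have := hmono.monotone h; omega)
          have e3 : ζ a z = 0 := hzero _ _ (fun h => by
            have : x < z := hxa.trans_le h
            exact (this.trans hzltx).false)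
          simp [zzA, zrA, haz, e1, e2, e3]
      rw [Finset.sum_eq_zero h1]
      simp [zzA, zrA]
    · rw [if_neg huz, hfs, ← Finset.add_sum_erase _ _ hzmem, ← hT]
      have hcong : ∑ a ∈ T,
          ((-1 : ℚ) ^ (zrA ρ x z a - zrA ρ x z u₀) * zzA ζ x y z u₀ a
            * zzA ζ x y z a z)
          = ∑ a ∈ T,
          ((-1 : ℚ) ^ (ρ a - ρ u₀) * ζ u₀ a * ζ a x
            + (-1 : ℚ) ^ (ρ a - ρ u₀) * ζ u₀ a * ζ a y
            - (-1 : ℚ) ^ (ρ a - ρ u₀) * ζ u₀ a * ζ a z) :=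
        Finset.sum_congr rfl (fun a ha => by
          obtain ⟨hax, hay, haz⟩ := hTmem a ha
          simp only [zzA, zrA, eq_self_iff_true, if_true, if_neg haz, if_neg huz, if_pos rfl]
          ring)
      rw [hcong, Finset.sum_sub_distrib, Finset.sum_add_distrib,
        hfull u₀ x, hfull u₀ y, hfull u₀ z,
        if_neg hux, if_neg huy, if_neg huz,
        hζyx, hζxy, hζxz, hζyz, hrefl x, hrefl y, hrefl z, h1x, h1y]
      simp only [zzA, zrA, eq_self_iff_true, if_true, if_pos rfl, if_neg huz]
      rw [← hrxy]
      by_cases hC : ζ u₀ z = 0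
      · rw [hC]; ring
      · have h5 : ρ u₀ < ρ z := hmono (lt_of_le_of_ne (hble _ _ hC) huz)
        rw [show ρ x - ρ u₀ = (ρ z - ρ u₀) + 1 from by omega, pow_succ]
        ring
  · by_cases huz : u₀ = z
    · rw [huz, if_neg (fun h => hvz h.symm), hfs,
        ← Finset.add_sum_erase _ _ hzmem, ← hT]
      have hcong : ∑ a ∈ T,
          ((-1 : ℚ) ^ (zrA ρ x z a - zrA ρ x z z) * zzA ζ x y z z a
            * zzA ζ x y z a v₀)
          = ∑ a ∈ T, ((-1 : ℚ) ^ (ρ a - ρ x) * ζ x a * ζ a v₀) :=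
        Finset.sum_congr rfl (fun a ha => by
          obtain ⟨hax, hay, haz⟩ := hTmem a ha
          simp only [zzA, zrA, eq_self_iff_true, if_true, if_neg haz, if_neg hvz, if_pos rfl])
      rw [hcong, hfull x v₀, if_neg (Ne.symm hvx)]
      simp only [zzA, zrA, eq_self_iff_true, if_true, if_pos rfl, if_neg hvz]
      rw [hζxy, hζxz, hrefl x, Nat.sub_self, pow_zero]
      ring
    · rw [hfs, ← Finset.add_sum_erase _ _ hzmem, ← hT]
      have hcong : ∑ a ∈ T,
          ((-1 : ℚ) ^ (zrA ρ x z a - zrA ρ x z u₀) * zzA ζ x y z u₀ a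
            * zzA ζ x y z a v₀)
          = ∑ a ∈ T, ((-1 : ℚ) ^ (ρ a - ρ u₀) * ζ u₀ a * ζ a v₀) :=
        Finset.sum_congr rfl (fun a ha => by
          obtain ⟨hax, hay, haz⟩ := hTmem a ha
          simp only [zzA, zrA, eq_self_iff_true, if_true, if_neg haz, if_neg huz, if_neg hvz])
      rw [hcong, hfull u₀ v₀]
      simp only [zzA, zrA, eq_self_iff_true, if_true, if_pos rfl, if_neg huz, if_neg hvz]
      have hmain : (-1 : ℚ) ^ (ρ x - ρ u₀) * (ζ u₀ x + ζ u₀ y - ζ u₀ z) * ζ x v₀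
          = (-1 : ℚ) ^ (ρ x - ρ u₀) * ζ u₀ x * ζ x v₀
            + (-1 : ℚ) ^ (ρ y - ρ u₀) * ζ u₀ y * ζ y v₀
            + (-1 : ℚ) ^ (ρ z - ρ u₀) * ζ u₀ z * ζ z v₀ := by
        by_cases hxv : x < v₀
        · obtain ⟨e1, e2⟩ := hzeta v₀ (hzltx.trans hxv) (hmono hxv)
          rw [e1, e2, ← hrxy]
          by_cases hC : ζ u₀ z = 0
          · rw [hC]; ring
          · have h5 : ρ u₀ < ρ z := hmono (lt_of_le_of_ne (hble _ _ hC) huz)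
            rw [show ρ x - ρ u₀ = (ρ z - ρ u₀) + 1 from by omega, pow_succ]
            ring
        · have hxv0 : ζ x v₀ = 0 :=
            hzero _ _ (fun h => hxv (lt_of_le_of_ne h (Ne.symm hvx)))
          have hyv0 : ζ y v₀ = 0 := by
            by_contra h0
            have hyv : y < v₀ := lt_of_le_of_ne (hble _ _ h0) (Ne.symm hvy)
            have hρv : ρ x < ρ v₀ := by have := hmono hyv; omega
            obtain ⟨e1, e2⟩ := hzeta v₀ (hzlty.trans hyv) hρv
            rw [e2, ← e1, hxv0] at h0
            exact h0 rfl
          have hzv0 : ζ z v₀ = 0 := by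
            by_contra h0
            have hzv : z < v₀ := lt_of_le_of_ne (hble _ _ h0) (Ne.symm hvz)
            have hρv : ρ x < ρ v₀ := by
              rcases lt_or_ge (ρ x) (ρ v₀) with h | h
              · exact h
              · exfalso
                have h1 : ρ z < ρ v₀ := hmono hzv
                have hcv : z ⋖ v₀ := by
                  refine ⟨hzv, fun m hm1 hm2 => ?_⟩
                  have := hmono hm1; have := hmono hm2; omega
                rcases hcov v₀ hcv with h' | h'
                · exact hvx h'
                · exact hvy h'
            obtain ⟨e1, _⟩ := hzeta v₀ hzv hρv
            rw [← e1, hxv0] at h0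
            exact h0 rfl
          rw [hxv0, hyv0, hzv0]; ring
      rw [hmain]
      ring

/-- zipping preserves the Eulerian property. -/
theorem zipping_preserves_eulerian {α : Type*} [Fintype α] [PartialOrder α]
    [BoundedOrder α] (ρ : α → ℕ) (ζ : α → α → ℚ)
    (hq : IsQuasiGraded ρ ζ) (hE : IsEulerian ρ ζ)
    (x y z : α) (hxy : x ≠ y)
    (hrxy : ρ x = ρ y) (hrz : ρ x = ρ z + 1)
    (hzx : z ⋖ x) (hzy : z ⋖ y) (hcov : ∀ v : α, z ⋖ v → v = x ∨ v = y)
    (hzeta : ∀ v : α, z < v → ρ x < ρ v → ζ x v = ζ z v ∧ ζ y v = ζ z v)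
    (h1x : ζ z x = 1) (h1y : ζ z y = 1) :
    IsEulerianRel (zipLe x y z) (zipRank ρ x y z) (zipZeta ζ x y z) := by
  obtain ⟨hmono, hrefl, hzero⟩ := hq
  have hble : ∀ a b : α, ζ a b ≠ 0 → a ≤ b := fun a b h => by
    by_contra hh; exact h (hzero a b hh)
  have hzne : ∀ a b : ZipCarrier α x y, zipZeta ζ x y z a b ≠ 0 → zipLe x y z a b := by
    rintro ⟨a, hax, hay⟩ ⟨b, hbx, hby⟩ hne
    simp only [zipZeta] at hne
    by_cases hbz : b = z
    · by_cases haz : a = z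
      · right; exact Subtype.ext (haz.trans hbz.symm)
      · rw [if_pos hbz, if_neg haz] at hne
        left
        show (zipLt x y z _ _)
        simp only [zipLt, if_neg haz, if_pos hbz]
        by_contra hcon
        push_neg at hcon
        obtain ⟨h1, h2⟩ := hcon
        have e1 : ζ a x = 0 := hzero _ _ (fun h => absurd (lt_of_le_of_ne h hax) h1)
        have e2 : ζ a y = 0 := hzero _ _ (fun h => absurd (lt_of_le_of_ne h hay) h2)
        have e3 : ζ a z = 0 := hzero _ _ (fun h =>
          absurd ((lt_of_le_of_ne h haz).trans hzx.lt) h1)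
        rw [e1, e2, e3] at hne
        exact hne (by ring)
    · by_cases haz : a = z
      · rw [if_neg hbz, if_pos haz] at hne
        left
        show (zipLt x y z _ _)
        simp only [zipLt, if_pos haz]
        exact ⟨hbz, lt_of_le_of_ne (hble _ _ hne) (Ne.symm hbx)⟩
      · rw [if_neg hbz, if_neg haz] at hne
        rcases eq_or_lt_of_le (hble _ _ hne) with h | h
        · right; exact Subtype.ext h
        · left
          show (zipLt x y z _ _)
          simp only [zipLt, if_neg haz, if_neg hbz]
          exact h
  intro u v huv
  have hext := Finset.sum_filter_of_ne
    (s := (Finset.univ : Finset (ZipCarrier α x y)))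
    (f := fun y' => (-1 : ℚ) ^ (zipRank ρ x y z y' - zipRank ρ x y z u)
      * zipZeta ζ x y z u y' * zipZeta ζ x y z y' v)
    (p := fun y' => zipLe x y z u y' ∧ zipLe x y z y' v)
    (fun y' _ hne => by
      constructor
      · refine hzne _ _ (fun h => hne ?_)
        show (-1 : ℚ) ^ (zipRank ρ x y z y' - zipRank ρ x y z u)
          * zipZeta ζ x y z u y' * zipZeta ζ x y z y' v = 0
        rw [h]; ring
      · refine hzne _ _ (fun h => hne ?_)
        show (-1 : ℚ) ^ (zipRank ρ x y z y' - zipRank ρ x y z u)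
          * zipZeta ζ x y z u y' * zipZeta ζ x y z y' v = 0
        rw [h]; ring)
  rw [hext]
  have hbody : ∀ y' : ZipCarrier α x y,
      (-1 : ℚ) ^ (zipRank ρ x y z y' - zipRank ρ x y z u)
        * zipZeta ζ x y z u y' * zipZeta ζ x y z y' v
      = (-1 : ℚ) ^ (zrA ρ x z y'.1 - zrA ρ x z u.1) * zzA ζ x y z u.1 y'.1
        * zzA ζ x y z y'.1 v.1 := fun _ => rfl
  rw [Finset.sum_congr rfl (fun y' _ => hbody y')]
  have hkey := zip_key ρ ζ ⟨hmono, hrefl, hzero⟩ hE x y z hxy hrxy hrz hzx hzy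
    hcov hzeta h1x h1y u.1 v.1 u.2.1 u.2.2 v.2.1 v.2.2
  have hsub : (∑ y' : ZipCarrier α x y,
        (-1 : ℚ) ^ (zrA ρ x z y'.1 - zrA ρ x z u.1) * zzA ζ x y z u.1 y'.1
          * zzA ζ x y z y'.1 v.1)
      = ∑ a ∈ Finset.univ.filter (fun a => a ≠ x ∧ a ≠ y),
          ((-1 : ℚ) ^ (zrA ρ x z a - zrA ρ x z u.1) * zzA ζ x y z u.1 a
            * zzA ζ x y z a v.1) := by
    exact (Finset.sum_subtype (p := fun a => a ≠ x ∧ a ≠ y)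
      (Finset.univ.filter (fun a => a ≠ x ∧ a ≠ y))
      (fun a => by simp)
      (fun a => (-1 : ℚ) ^ (zrA ρ x z a - zrA ρ x z u.1)
        * zzA ζ x y z u.1 a * zzA ζ x y z a v.1)).symm
  rw [hsub, hkey]
  rcases eq_or_ne u v with h | h
  · rw [if_pos (congrArg Subtype.val h), if_pos h]
  · rw [if_neg (fun hh => h (Subtype.ext hh)), if_neg h]
end
end
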